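/- For every integer n ≥ 4, the star-clique transform of H_n at the vertex v is isomorphic to K_{n−1} □ K_2. -/

import Mathlib

/-- The star-clique transform of `G` at `v`: delete `v`, and join two remaining vertices iff
they were adjacent in `G` or both were neighbors of `v`. -/
def starClique {V : Type*} (G : SimpleGraph V) (v : V) : SimpleGraph {x : V // x ≠ v} :=
  SimpleGraph.fromRel (fun x y => G.Adj x y ∨ (G.Adj v x ∧ G.Adj v y))

/-- The graph `H_n`, obtained from `K_n` by subdividing once every edge incident to a fixed
vertex `v`.  Here `none` is `v`, `some (Sum.inl i)` is the degree-2 subdivision vertex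
`a_{i+1}`, and `some (Sum.inr i)` is the vertex `b_{i+1}` of the clique on `B_n`. -/
def Hgraph (n : ℕ) : SimpleGraph (Option (Fin (n - 1) ⊕ Fin (n - 1))) :=
  SimpleGraph.fromRel (fun x y =>
    (∃ i : Fin (n - 1), x = none ∧ y = some (Sum.inl i)) ∨
    (∃ i : Fin (n - 1), x = some (Sum.inl i) ∧ y = some (Sum.inr i)) ∨
    (∃ i j : Fin (n - 1), x = some (Sum.inr i) ∧ y = some (Sum.inr j)))

/-- The Cartesian (box) product `K_a □ K_2`. -/
def KaK2 (a : ℕ) : SimpleGraph (Fin a × Fin 2) :=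
  SimpleGraph.boxProd ⊤ ⊤

def myEquiv (n : ℕ) : {x : Option (Fin (n - 1) ⊕ Fin (n - 1)) // x ≠ none} ≃ Fin (n - 1) × Fin 2 where
  toFun := fun x => match x with
    | ⟨some (Sum.inl i), _⟩ => (i, 0)
    | ⟨some (Sum.inr i), _⟩ => (i, 1)
    | ⟨none, hx⟩ => absurd rfl hx
  invFun := fun p => if p.2 = 0 then ⟨some (Sum.inl p.1), by simp⟩ else ⟨some (Sum.inr p.1), by simp⟩
  left_inv := by
    rintro ⟨(_|(i|i)), hx⟩
    · exact absurd rfl hx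
    · simp
    · simp
  right_inv := by
    rintro ⟨i, j⟩
    fin_cases j <;> simp


theorem starClique_Hgraph_iso (n : ℕ) (hn : 4 ≤ n) :
    Nonempty (SimpleGraph.Iso (starClique (Hgraph n) none) (KaK2 (n - 1))) := by
  refine ⟨⟨myEquiv n, ?_⟩⟩
  rintro ⟨(_|(i|i)), hx⟩ ⟨(_|(j|j)), hy⟩ <;>
    try exact absurd rfl hx
  all_goals try exact absurd rfl hy
  all_goals
    simp_all [myEquiv, starClique, KaK2, Hgraph, SimpleGraph.fromRel_adj,
      SimpleGraph.boxProd_adj, Fin.ext_iff, Subtype.ext_iff, -Fin.val_eq_zero_iff]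
  all_goals
    exact ⟨fun h => ⟨j, by omega, by omega⟩, fun ⟨k, h1, h2⟩ => by omega⟩
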